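/- Let O ⊆ ℝ^l be open and let m : O × [0, T] → ℝ^d and E : O × [0, T] → ℝ^{d×d} be continuously differentiable, with the mixed partial derivatives ∂_{λ_i} ∂_t E existing and satisfying ∂_{λ_i} ∂_t E = ∂_t ∂_{λ_i} E. Suppose that for every λ ∈ O the second-moment equation ∂_t E(λ, t) = C G(λ)ᵀ Γ^{-1} (y(λ) ⊗ m − G(λ) E) + [C G(λ)ᵀ Γ^{-1} (y(λ) ⊗ m − G(λ) E)]ᵀ holds, where C := E − m ⊗ m and y ⊗ m denotes the k×d matrix y mᵀ. Then, writing m_{λ_i} := ∂_{λ_i} m, E_{λ_i} := ∂_{λ_i} E and C̄_i := E_{λ_i} − m_{λ_i} ⊗ m − m ⊗ m_{λ_i}, the sensitivity E_{λ_i} satisfies ∂_t E_{λ_i} = C G(λ)ᵀ Γ^{-1} (y(λ) ⊗ m_{λ_i} − G(λ) E_{λ_i}) + C̄_i G(λ)ᵀ Γ^{-1} (y(λ) ⊗ m − G(λ) E) + C G_iᵀ Γ^{-1} (y(λ) ⊗ m − G(λ) E) + C G(λ)ᵀ Γ^{-1} (y_i ⊗ m − G_i E) + the transposes of these four terms. 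-/

import Mathlib

/-!
Sensitivity of the second moment with respect to the weights λ: if `m`, `E` are C¹ on
`O × [0,T]`, the mixed partials `∂_{λᵢ} ∂_t E` exist and equal `∂_t ∂_{λᵢ} E`, and `E`
satisfies the second-moment equation
`∂_t E = C G(λ)ᵀ Γ⁻¹ (y(λ) ⊗ m − G(λ) E) + [C G(λ)ᵀ Γ⁻¹ (y(λ) ⊗ m − G(λ) E)]ᵀ`
with `C = E − m ⊗ m`, then `E_{λᵢ} = ∂_{λᵢ} E` satisfies
`∂_t E_{λᵢ} = C G(λ)ᵀ Γ⁻¹ (y(λ) ⊗ m_{λᵢ} − G(λ) E_{λᵢ})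
  + C̄ᵢ G(λ)ᵀ Γ⁻¹ (y(λ) ⊗ m − G(λ) E) + C Gᵢᵀ Γ⁻¹ (y(λ) ⊗ m − G(λ) E)
  + C G(λ)ᵀ Γ⁻¹ (yᵢ ⊗ m − Gᵢ E) + (transposes of these four terms)`,
where `C̄ᵢ = E_{λᵢ} − m_{λᵢ} ⊗ m − m ⊗ m_{λᵢ}`.
-/

open Matrix Set Function

attribute [local instance] Matrix.normedAddCommGroup Matrix.normedSpace

/-- The weighted forward operator `G(λ) = ∑ᵢ λᵢ Gᵢ`. -/
noncomputable def Gw {d k l : ℕ} (G : Fin l → Matrix (Fin k) (Fin d) ℝ)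
    (lam : Fin l → ℝ) : Matrix (Fin k) (Fin d) ℝ := ∑ i, lam i • G i

/-- The weighted observation `y(λ) = ∑ᵢ λᵢ yᵢ`. -/
noncomputable def yw {k l : ℕ} (y : Fin l → Fin k → ℝ) (lam : Fin l → ℝ) :
    Fin k → ℝ := ∑ i, lam i • y i


theorem HasDerivAt.matMul {m n p : ℕ} {A : ℝ → Matrix (Fin m) (Fin n) ℝ}
    {B : ℝ → Matrix (Fin n) (Fin p) ℝ} {A' : Matrix (Fin m) (Fin n) ℝ}
    {B' : Matrix (Fin n) (Fin p) ℝ} {x : ℝ}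
    (hA : HasDerivAt A A' x) (hB : HasDerivAt B B' x) :
    HasDerivAt (fun x => A x * B x) (A' * B x + A x * B') x := by
  refine hasDerivAt_pi.2 fun i => ?_
  refine hasDerivAt_pi.2 fun j => ?_
  simp only [Matrix.mul_apply, Matrix.add_apply, ← Finset.sum_add_distrib]
  refine HasDerivAt.fun_sum fun c _ => ?_
  exact (((hasDerivAt_pi.1 (hasDerivAt_pi.1 hA i)) c).mul
    ((hasDerivAt_pi.1 (hasDerivAt_pi.1 hB c)) j))

theorem HasDerivAt.vecMulVec' {m n : ℕ} {u : ℝ → Fin m → ℝ} {v : ℝ → Fin n → ℝ}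
    {u' : Fin m → ℝ} {v' : Fin n → ℝ} {x : ℝ}
    (hu : HasDerivAt u u' x) (hv : HasDerivAt v v' x) :
    HasDerivAt (fun x => vecMulVec (u x) (v x))
      (vecMulVec u' (v x) + vecMulVec (u x) v') x := by
  refine hasDerivAt_pi.2 fun i => ?_
  refine hasDerivAt_pi.2 fun j => ?_
  simp only [Matrix.vecMulVec_apply, Matrix.add_apply]
  exact ((hasDerivAt_pi.1 hu i).mul ((hasDerivAt_pi.1 hv j)))

theorem HasDerivAt.matTranspose {m n : ℕ} {A : ℝ → Matrix (Fin m) (Fin n) ℝ}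
    {A' : Matrix (Fin m) (Fin n) ℝ} {x : ℝ} (hA : HasDerivAt A A' x) :
    HasDerivAt (fun x => (A x)ᵀ) A'ᵀ x := by
  refine hasDerivAt_pi.2 fun i => ?_
  refine hasDerivAt_pi.2 fun j => ?_
  exact hasDerivAt_pi.1 (hasDerivAt_pi.1 hA j) i

theorem hasDerivAt_Gw_update {d k l : ℕ} (G : Fin l → Matrix (Fin k) (Fin d) ℝ)
    (lam : Fin l → ℝ) (i : Fin l) (s : ℝ) :
    HasDerivAt (fun s => Gw G (Function.update lam i s)) (G i) s := by
  unfold Gw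
  have h : HasDerivAt (fun s => ∑ j, Function.update lam i s j • G j)
      (∑ j, if j = i then G j else 0) s := by
    refine HasDerivAt.fun_sum fun j _ => ?_
    by_cases h : j = i
    · subst h
      simp only [Function.update_self, if_pos rfl]
      simpa using (hasDerivAt_id s).smul_const (G j)
    · simp only [Function.update_of_ne h, if_neg h]
      exact hasDerivAt_const s _
  simpa using h

theorem hasDerivAt_yw_update {k l : ℕ} (y : Fin l → Fin k → ℝ)
    (lam : Fin l → ℝ) (i : Fin l) (s : ℝ) :
    HasDerivAt (fun s => yw y (Function.update lam i s)) (y i) s := by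
  unfold yw
  have h : HasDerivAt (fun s => ∑ j, Function.update lam i s j • y j)
      (∑ j, if j = i then y j else 0) s := by
    refine HasDerivAt.fun_sum fun j _ => ?_
    by_cases h : j = i
    · subst h
      simp only [Function.update_self, if_pos rfl]
      simpa using (hasDerivAt_id s).smul_const (y j)
    · simp only [Function.update_of_ne h, if_neg h]
      exact hasDerivAt_const s _
  simpa using h

theorem second_moment_sensitivity_equation
    {d k l : ℕ} (hd : 1 ≤ d) (hk : 1 ≤ k) (hl : 1 ≤ l)
    (G : Fin l → Matrix (Fin k) (Fin d) ℝ) (y : Fin l → Fin k → ℝ)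
    (Γ : Matrix (Fin k) (Fin k) ℝ) (hΓ : Γ.PosDef)
    (O : Set (Fin l → ℝ)) (hO : IsOpen O) (T : ℝ) (hT : 0 < T)
    (m : (Fin l → ℝ) → ℝ → Fin d → ℝ)
    (E : (Fin l → ℝ) → ℝ → Matrix (Fin d) (Fin d) ℝ)
    (Et : (Fin l → ℝ) → ℝ → Matrix (Fin d) (Fin d) ℝ)
    (mlam : Fin l → (Fin l → ℝ) → ℝ → Fin d → ℝ)
    (Elam : Fin l → (Fin l → ℝ) → ℝ → Matrix (Fin d) (Fin d) ℝ)
    (Etlam : Fin l → (Fin l → ℝ) → ℝ → Matrix (Fin d) (Fin d) ℝ)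
    -- `Et` is the time derivative of `E`
    (hEt : ∀ lam ∈ O, ∀ t ∈ Icc (0 : ℝ) T,
      HasDerivWithinAt (E lam) (Et lam t) (Icc 0 T) t)
    -- `mlam i`, `Elam i` are the partial derivatives of `m`, `E` with respect to `λᵢ`
    (hmlam : ∀ lam ∈ O, ∀ t ∈ Icc (0 : ℝ) T, ∀ i,
      HasDerivAt (fun s => m (update lam i s) t) (mlam i lam t) (lam i))
    (hElam : ∀ lam ∈ O, ∀ t ∈ Icc (0 : ℝ) T, ∀ i,
      HasDerivAt (fun s => E (update lam i s) t) (Elam i lam t) (lam i))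
    -- continuity of the partial derivatives (`m`, `E` continuously differentiable)
    (hEtc : ContinuousOn (fun p : (Fin l → ℝ) × ℝ => Et p.1 p.2) (O ×ˢ Icc 0 T))
    (hmlamc : ∀ i, ContinuousOn (fun p : (Fin l → ℝ) × ℝ => mlam i p.1 p.2) (O ×ˢ Icc 0 T))
    (hElamc : ∀ i, ContinuousOn (fun p : (Fin l → ℝ) × ℝ => Elam i p.1 p.2) (O ×ˢ Icc 0 T))
    -- the mixed partials `∂_{λᵢ} ∂_t E` exist and equal `∂_t ∂_{λᵢ} E` (both `= Etlam i`)
    (hmix : ∀ lam ∈ O, ∀ t ∈ Icc (0 : ℝ) T, ∀ i,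
      HasDerivAt (fun s => Et (update lam i s) t) (Etlam i lam t) (lam i) ∧
      HasDerivWithinAt (fun s => Elam i lam s) (Etlam i lam t) (Icc 0 T) t)
    -- the second-moment equation, with `C = E − m ⊗ m`
    (hmom : ∀ lam ∈ O, ∀ t ∈ Icc (0 : ℝ) T,
      Et lam t
        = (E lam t - vecMulVec (m lam t) (m lam t)) * (Gw G lam)ᵀ * Γ⁻¹
            * (vecMulVec (yw y lam) (m lam t) - Gw G lam * E lam t)
          + ((E lam t - vecMulVec (m lam t) (m lam t)) * (Gw G lam)ᵀ * Γ⁻¹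
            * (vecMulVec (yw y lam) (m lam t) - Gw G lam * E lam t))ᵀ) :
    -- conclusion: the sensitivity equation for `E_{λᵢ}`
    ∀ lam ∈ O, ∀ t ∈ Icc (0 : ℝ) T, ∀ i,
      HasDerivWithinAt (fun s => Elam i lam s)
        ((E lam t - vecMulVec (m lam t) (m lam t)) * (Gw G lam)ᵀ * Γ⁻¹
            * (vecMulVec (yw y lam) (mlam i lam t) - Gw G lam * Elam i lam t)
          + (Elam i lam t - vecMulVec (mlam i lam t) (m lam t)
              - vecMulVec (m lam t) (mlam i lam t)) * (Gw G lam)ᵀ * Γ⁻¹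
            * (vecMulVec (yw y lam) (m lam t) - Gw G lam * E lam t)
          + (E lam t - vecMulVec (m lam t) (m lam t)) * (G i)ᵀ * Γ⁻¹
            * (vecMulVec (yw y lam) (m lam t) - Gw G lam * E lam t)
          + (E lam t - vecMulVec (m lam t) (m lam t)) * (Gw G lam)ᵀ * Γ⁻¹
            * (vecMulVec (y i) (m lam t) - G i * E lam t)
          + ((E lam t - vecMulVec (m lam t) (m lam t)) * (Gw G lam)ᵀ * Γ⁻¹
            * (vecMulVec (yw y lam) (mlam i lam t) - Gw G lam * Elam i lam t))ᵀ
          + ((Elam i lam t - vecMulVec (mlam i lam t) (m lam t)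
              - vecMulVec (m lam t) (mlam i lam t)) * (Gw G lam)ᵀ * Γ⁻¹
            * (vecMulVec (yw y lam) (m lam t) - Gw G lam * E lam t))ᵀ
          + ((E lam t - vecMulVec (m lam t) (m lam t)) * (G i)ᵀ * Γ⁻¹
            * (vecMulVec (yw y lam) (m lam t) - Gw G lam * E lam t))ᵀ
          + ((E lam t - vecMulVec (m lam t) (m lam t)) * (Gw G lam)ᵀ * Γ⁻¹
            * (vecMulVec (y i) (m lam t) - G i * E lam t))ᵀ)
        (Icc 0 T) t := by
  intro lam hlam t ht i
  obtain ⟨hD1, hD2⟩ := hmix lam hlam t ht i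
  have hm' : HasDerivAt (fun s => m (update lam i s) t) (mlam i lam t) (lam i) :=
    hmlam lam hlam t ht i
  have hE' : HasDerivAt (fun s => E (update lam i s) t) (Elam i lam t) (lam i) :=
    hElam lam hlam t ht i
  have hG' := hasDerivAt_Gw_update G lam i (lam i)
  have hy' := hasDerivAt_yw_update y lam i (lam i)
  have hC := hE'.sub (hm'.vecMulVec' hm')
  have hA := (hC.matMul hG'.matTranspose).matMul (hasDerivAt_const (lam i) Γ⁻¹)
  have hV := (hy'.vecMulVec' hm').sub (hG'.matMul hE')
  have hAV := hA.matMul hV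
  have hH := hAV.add hAV.matTranspose
  have hOmem : ∀ᶠ s in nhds (lam i), update lam i s ∈ O := by
    have hc : Continuous fun s : ℝ => Function.update lam i s :=
      continuous_const.update i continuous_id
    exact hc.continuousAt.eventually_mem (hO.mem_nhds (by simpa using hlam))
  have hFs : HasDerivAt (fun s => Et (update lam i s) t) _ (lam i) :=
    hH.congr_of_eventuallyEq (by
      filter_upwards [hOmem] with s hs
      exact hmom _ hs t ht)
  have key := hD1.unique hFs
  convert hD2 using 1
  rw [key]
  simp only [Pi.sub_apply, Function.update_eq_self, Matrix.mul_zero, add_zero,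
    Matrix.add_mul, Matrix.mul_add, Matrix.mul_sub, Matrix.sub_mul,
    Matrix.transpose_add, Matrix.transpose_sub, sub_sub]
  abel
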